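/- Let m : [0,T] → ℝ be non-decreasing and bounded, K : [0,T] → ℝ≥0 measurable with ∫₀ᵀ K(r) dr < ∞, and f nonnegative and bounded on [0,T] satisfying f(t) ≤ m(t) + ∫₀ᵗ K(t−r) f(r) dr for all t ∈ [0,T]. Then there exists a constant λ₀ ≥ 0 (depending only on T and ∫₀ᵀ K) such that f(t) ≤ 2 e^{λ₀ t} m(t) for all t ∈ [0,T]. -/
import Mathlib

open MeasureTheory Set
open Filter Topology

/-- Grönwall inequality with a singular integrable convolution kernel. -/
theorem gronwall_singular_kernel (T : ℝ) (hT : 0 < T) (m K f : ℝ → ℝ)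
    (hm_mono : MonotoneOn m (Icc 0 T))
    (hm_bdd : ∃ B : ℝ, ∀ t ∈ Icc 0 T, |m t| ≤ B)
    (hK_meas : Measurable K)
    (hK_nonneg : ∀ t ∈ Icc 0 T, 0 ≤ K t)
    (hK_int : IntegrableOn K (Ioc 0 T))
    (hf_nonneg : ∀ t ∈ Icc 0 T, 0 ≤ f t)
    (hf_bdd : ∃ B : ℝ, ∀ t ∈ Icc 0 T, f t ≤ B)
    (hineq : ∀ t ∈ Icc 0 T, f t ≤ m t + ∫ r in (0:ℝ)..t, K (t - r) * f r) :
    ∃ lam ≥ (0:ℝ), ∀ t ∈ Icc 0 T, f t ≤ 2 * Real.exp (lam * t) * m t := by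
  obtain ⟨B, hB⟩ := hf_bdd
  -- integrability of e^{-λs} K s on Ioc 0 T
  have hint : ∀ lam : ℝ, 0 ≤ lam →
      IntegrableOn (fun s => Real.exp (-(lam * s)) * K s) (Ioc 0 T) := by
    intro lam hlam
    apply hK_int.bdd_mul (c := 1)
    · exact (Real.continuous_exp.comp (continuous_const.mul continuous_id).neg).aestronglyMeasurable
    · filter_upwards [ae_restrict_mem measurableSet_Ioc] with s hs
      rw [Real.norm_eq_abs, abs_of_pos (Real.exp_pos _)]
      exact Real.exp_le_one_iff.2 (by nlinarith [hs.1])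
  -- Step 1: choose lam with ∫ e^{-λ s} K s ≤ 1/2
  obtain ⟨n, hn⟩ : ∃ n : ℕ, (∫ s in Ioc 0 T, Real.exp (-((n : ℝ) * s)) * K s) < 1/2 := by
    have hdct : Tendsto (fun n : ℕ => ∫ s in Ioc 0 T, Real.exp (-((n : ℝ) * s)) * K s)
        atTop (𝓝 (∫ s in Ioc 0 T, (0 : ℝ))) := by
      apply tendsto_integral_of_dominated_convergence K
      · intro n
        exact ((Real.continuous_exp.comp
          (continuous_const.mul continuous_id).neg).aestronglyMeasurable).mul
          hK_meas.aestronglyMeasurable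
      · exact hK_int
      · intro n
        filter_upwards [ae_restrict_mem measurableSet_Ioc] with s hs
        rw [Real.norm_eq_abs, abs_mul, abs_of_pos (Real.exp_pos _),
          abs_of_nonneg (hK_nonneg s ⟨hs.1.le, hs.2⟩)]
        nlinarith [Real.exp_le_one_iff.2 (show -((n:ℝ)*s) ≤ 0 from neg_nonpos.2 (mul_nonneg (Nat.cast_nonneg n) hs.1.le)),
          hK_nonneg s ⟨hs.1.le, hs.2⟩, Real.exp_pos (-((n:ℝ)*s))]
      · filter_upwards [ae_restrict_mem measurableSet_Ioc] with s hs
        have h1 : Tendsto (fun n : ℕ => -((n:ℝ) * s)) atTop atBot := by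
          exact tendsto_neg_atTop_atBot.comp
            (Tendsto.atTop_mul_const hs.1 tendsto_natCast_atTop_atTop)
        have := (Real.tendsto_exp_atBot.comp h1).mul_const (K s)
        simpa using this
    simp only [integral_zero] at hdct
    exact (hdct.eventually_lt_const (by norm_num : (0:ℝ) < 1/2)).exists
  set lam : ℝ := (n : ℝ) with hlamdef
  have hlam : 0 ≤ lam := Nat.cast_nonneg n
  refine ⟨lam, hlam, ?_⟩
  -- m is nonnegative on [0,T]
  have hm0 : 0 ≤ m 0 := by
    have h := hineq 0 ⟨le_refl 0, hT.le⟩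
    rw [intervalIntegral.integral_same] at h
    have := hf_nonneg 0 ⟨le_refl 0, hT.le⟩
    linarith
  have hmnn : ∀ t ∈ Icc 0 T, 0 ≤ m t := fun t ht =>
    hm0.trans (hm_mono ⟨le_refl 0, hT.le⟩ ht ht.1)
  -- the weighted function and its running sup
  set g : ℝ → ℝ := fun r => Real.exp (-(lam * r)) * f r with hg
  intro t₀ ht₀
  set S : ℝ := sSup (g '' Icc 0 t₀) with hS
  have hne : (g '' Icc 0 t₀).Nonempty := ⟨g 0, mem_image_of_mem g ⟨le_refl 0, ht₀.1⟩⟩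
  have hbdd : BddAbove (g '' Icc 0 t₀) := by
    refine ⟨max B 0, ?_⟩
    rintro x ⟨r, hr, rfl⟩
    have hrT : r ∈ Icc 0 T := ⟨hr.1, hr.2.trans ht₀.2⟩
    have h1 : Real.exp (-(lam * r)) ≤ 1 := Real.exp_le_one_iff.2 (by nlinarith [hr.1])
    have := hf_nonneg r hrT
    have := hB r hrT
    calc Real.exp (-(lam * r)) * f r ≤ 1 * f r := by nlinarith
      _ ≤ max B 0 := by simp; left; linarith
  have hS0 : 0 ≤ S := by
    have : g 0 ≤ S := le_csSup hbdd (mem_image_of_mem g ⟨le_refl 0, ht₀.1⟩)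
    have h0 : g 0 = f 0 := by simp [hg]
    have := hf_nonneg 0 ⟨le_refl 0, hT.le⟩
    linarith [h0 ▸ ‹g 0 ≤ S›]
  -- key pointwise bound on g over [0, t₀]
  have key : ∀ t ∈ Icc 0 t₀, g t ≤ m t₀ + S / 2 := by
    intro t ht
    have ht0 : (0:ℝ) ≤ t := ht.1
    have htT : t ≤ T := ht.2.trans ht₀.2
    have htIcc : t ∈ Icc (0:ℝ) T := ⟨ht0, htT⟩
    -- the convolution bound
    have hfr : ∀ r ∈ Ioc (0:ℝ) t, f r ≤ S * Real.exp (lam * r) := by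
      intro r hr
      have hgr : g r ≤ S := le_csSup hbdd (mem_image_of_mem g ⟨hr.1.le, hr.2.trans ht.2⟩)
      have he : Real.exp (-(lam * r)) * Real.exp (lam * r) = 1 := by
        rw [← Real.exp_add]; simp
      have h2 : Real.exp (-(lam * r)) * f r * Real.exp (lam * r) = f r := by
        rw [mul_comm (Real.exp (-(lam * r))) (f r), mul_assoc, he, mul_one]
      have h3 := mul_le_mul_of_nonneg_right hgr (Real.exp_pos (lam * r)).le
      change Real.exp (-(lam * r)) * f r * Real.exp (lam * r) ≤ S * Real.exp (lam * r) at h3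
      linarith
    have hconv : (∫ r in (0:ℝ)..t, K (t - r) * f r) ≤ S * Real.exp (lam * t) / 2 := by
      rw [intervalIntegral.integral_of_le ht0]
      by_cases hInt : IntegrableOn (fun r => K (t - r) * f r) (Ioc 0 t)
      · -- integrability of the dominating function
        have hKt : IntegrableOn (fun r => K (t - r)) (Ioc 0 t) := by
          have h1 : IntervalIntegrable K volume 0 t :=
            (intervalIntegrable_iff_integrableOn_Ioc_of_le ht0).2
              (hK_int.mono_set (Ioc_subset_Ioc_right htT))
          have h2 := h1.comp_sub_left t
          simp only [sub_zero, sub_self] at h2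
          exact (intervalIntegrable_iff_integrableOn_Ioc_of_le ht0).1 h2.symm
        have hKdom : IntegrableOn (fun r => K (t - r) * (S * Real.exp (lam * r)))
            (Ioc 0 t) := by
          have := hKt.bdd_mul (c := S * Real.exp (lam * t))
            (f := fun r => S * Real.exp (lam * r))
            ((continuous_const.mul (Real.continuous_exp.comp
              (continuous_const.mul continuous_id))).aestronglyMeasurable)
            (by
              filter_upwards [ae_restrict_mem measurableSet_Ioc] with r hr
              rw [Real.norm_eq_abs, abs_mul, abs_of_nonneg hS0,
                abs_of_pos (Real.exp_pos _)]
              have : Real.exp (lam * r) ≤ Real.exp (lam * t) :=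
                Real.exp_le_exp.2 (by nlinarith [hr.2])
              nlinarith)
          exact this.congr (ae_of_all _ fun r => by ring)
        have hKnn : ∀ r ∈ Ioc (0:ℝ) t, 0 ≤ K (t - r) := fun r hr =>
          hK_nonneg _ ⟨by linarith [hr.2], by linarith [hr.1]⟩
        calc (∫ r in Ioc 0 t, K (t - r) * f r)
            ≤ ∫ r in Ioc 0 t, K (t - r) * (S * Real.exp (lam * r)) := by
              apply setIntegral_mono_on hInt hKdom measurableSet_Ioc
              intro r hr
              exact mul_le_mul_of_nonneg_left (hfr r hr) (hKnn r hr)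
          _ = S * ∫ r in Ioc 0 t, K (t - r) * Real.exp (lam * r) := by
              rw [← MeasureTheory.integral_const_mul]
              exact integral_congr_ae (ae_of_all _ fun r => by ring)
          _ = S * (Real.exp (lam * t) * ∫ s in (0:ℝ)..t, Real.exp (-(lam * s)) * K s) := by
              congr 1
              rw [← intervalIntegral.integral_of_le ht0]
              have h := intervalIntegral.integral_comp_sub_left
                (a := 0) (b := t) (fun s => K s * Real.exp (lam * (t - s))) t
              simp only [sub_zero, sub_self, sub_sub_cancel] at h
              rw [show (∫ r in (0:ℝ)..t, K (t - r) * Real.exp (lam * r))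
                  = ∫ x in (0:ℝ)..t, K x * Real.exp (lam * (t - x)) from h ▸ rfl]
              rw [← intervalIntegral.integral_const_mul]
              apply intervalIntegral.integral_congr
              intro s _
              show K s * Real.exp (lam * (t - s)) = Real.exp (lam * t) * (Real.exp (-(lam * s)) * K s)
              rw [show lam * (t - s) = lam * t + -(lam * s) by ring, Real.exp_add]
              ring
          _ ≤ S * Real.exp (lam * t) / 2 := by
              have hJ : (∫ s in (0:ℝ)..t, Real.exp (-(lam * s)) * K s) ≤ 1/2 := by
                rw [intervalIntegral.integral_of_le ht0]
                refine le_trans (setIntegral_mono_set (hint lam hlam) ?_ ?_) hn.le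
                · filter_upwards [ae_restrict_mem measurableSet_Ioc] with s hs
                  have := hK_nonneg s ⟨hs.1.le, hs.2⟩
                  positivity
                · exact HasSubset.Subset.eventuallyLE (Ioc_subset_Ioc_right htT)
              have hJ0 : (0:ℝ) ≤ ∫ s in (0:ℝ)..t, Real.exp (-(lam * s)) * K s := by
                rw [intervalIntegral.integral_of_le ht0]
                apply setIntegral_nonneg measurableSet_Ioc
                intro s hs
                have := hK_nonneg s ⟨hs.1.le, hs.2.trans htT⟩
                positivity
              have hmul := mul_le_mul_of_nonneg_left hJ
                (mul_nonneg hS0 (Real.exp_pos (lam * t)).le)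
              nlinarith [Real.exp_pos (lam * t)]
      · rw [MeasureTheory.integral_undef hInt]
        positivity
    -- derive g t ≤ m t₀ + S/2
    have hmt : m t ≤ m t₀ := hm_mono htIcc ht₀ ht.2
    have hft := hineq t htIcc
    have he1 : Real.exp (-(lam * t)) * Real.exp (lam * t) = 1 := by
      rw [← Real.exp_add]; simp
    have he2 : Real.exp (-(lam * t)) ≤ 1 := Real.exp_le_one_iff.2 (by nlinarith)
    have hmt0 : 0 ≤ m t₀ := hmnn t₀ ht₀
    have : g t = Real.exp (-(lam * t)) * f t := rfl
    rw [this]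
    nlinarith [Real.exp_pos (-(lam * t))]
  -- conclude
  have hSle : S ≤ m t₀ + S / 2 := by
    apply csSup_le hne
    rintro x ⟨t, ht, rfl⟩
    exact key t ht
  have hS2 : S ≤ 2 * m t₀ := by linarith
  have hgt0 : g t₀ ≤ S := le_csSup hbdd (mem_image_of_mem g ⟨ht₀.1, le_refl t₀⟩)
  have he1 : Real.exp (-(lam * t₀)) * Real.exp (lam * t₀) = 1 := by
    rw [← Real.exp_add]; simp
  have : g t₀ = Real.exp (-(lam * t₀)) * f t₀ := rfl
  rw [this] at hgt0
  nlinarith [Real.exp_pos (lam * t₀), Real.exp_pos (-(lam * t₀))]
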